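/- arXiv:2102.02243 — 2 statements merged into one kernel-verified Lean document; each statement's English description precedes it below -/
import Mathlib

section
/- Let X and Z be jointly distributed random variables on finite sets, let {h_s : 𝒳 → {0,1}^t}_{s∈𝒮} and {h′_{s′} : 𝒳 → {0,1}^ℓ}_{s′∈𝒮′} be strong universal hash families, and let S, S′ be uniformly distributed on 𝒮, 𝒮′ respectively, mutually independent and independent of (X, Z); let U_ℓ be uniform on {0,1}^ℓ and independent of everything else. If 0 < σ ≤ 1 and ℓ ≤ H̃∞(X|Z) − t + 2·log₂ σ + 2, then SD((Z, h_S(X), S, S′, h′_{S′}(X)); (Z, h_S(X), S, S′, U_ℓ)) ≤ σ. That is, the key h′_{S′}(X) produced by the OWSKA-based iKEM with ciphertext (h_S(X), S′, S) is σ-indistinguishable from uniform given the adversary's view, i.e., the iKEM is σ-IND-OT secure. -/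
open scoped BigOperators Classical

/-- Statistical distance `SD(p;q) = max_{W ⊆ T} (Pr_p[W] − Pr_q[W])`. -/
noncomputable def SD {T : Type*} [Fintype T] (p q : T → ℝ) : ℝ :=
  Finset.univ.sup' Finset.univ_nonempty (fun W : Finset T => ∑ t ∈ W, p t - ∑ t ∈ W, q t)

/-- Average conditional min-entropy `H̃∞(A|B) = -log₂ Σ_b max_a Pr[A = a, B = b]`. -/
noncomputable def Havg {A B : Type*} [Fintype A] [Fintype B] [Nonempty A] (p : A × B → ℝ) : ℝ :=
  - Real.logb 2 (∑ b : B, Finset.univ.sup' Finset.univ_nonempty (fun a : A => p (a, b)))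

/-- A strong universal hash family. -/
def StrongUHF {S X Y : Type*} [Fintype S] [Fintype Y] (h : S → X → Y) : Prop :=
  ∀ x x' : X, x ≠ x' → ∀ a b : Y,
    ((Finset.univ.filter (fun s : S => h s x = a ∧ h s x' = b)).card : ℝ) / Fintype.card S
      = 1 / (Fintype.card Y : ℝ) ^ 2

section AuxLHL

open Finset

private lemma max_zero_eq' (a : ℝ) : max a 0 = (a + |a|) / 2 := by
  rcases le_total a 0 with ha | ha
  · rw [max_eq_right ha, abs_of_nonpos ha]; ring
  · rw [max_eq_left ha, abs_of_nonneg ha]; ring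

private lemma SD_le_half_l1 {T : Type*} [Fintype T] (p q : T → ℝ)
    (hpq : ∑ t : T, p t = ∑ t : T, q t) :
    SD p q ≤ (∑ t : T, |p t - q t|) / 2 := by
  apply Finset.sup'_le
  intro W _
  have h0 : ∑ t : T, (p t - q t) = 0 := by rw [Finset.sum_sub_distrib, hpq, sub_self]
  have h4 : ∑ t : T, max (p t - q t) 0 = (∑ t : T, |p t - q t|) / 2 := by
    simp_rw [max_zero_eq']
    rw [← Finset.sum_div, Finset.sum_add_distrib, h0, zero_add]
  have h2 : ∑ t ∈ W, (p t - q t) ≤ ∑ t : T, max (p t - q t) 0 :=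
    le_trans (Finset.sum_le_sum fun t _ => le_max_left _ _)
      (Finset.sum_le_sum_of_subset_of_nonneg (Finset.subset_univ W)
        fun t _ _ => le_max_right _ _)
  rw [← Finset.sum_sub_distrib]
  exact h2.trans (le_of_eq h4)

private lemma sum_ite_ite_mul {K : Type*} [Fintype K] [DecidableEq K] (a b : K) :
    ∑ k : K, (if a = k then (1:ℝ) else 0) * (if b = k then (1:ℝ) else 0)
      = if a = b then (1:ℝ) else 0 := by
  rcases eq_or_ne a b with rfl | hab
  · simp
  · simp only [ite_mul, one_mul, zero_mul]
    rw [Finset.sum_ite_eq]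
    simp [hab, Ne.symm hab]

private lemma uhf_count {S' X K : Type*} [Fintype S'] [Fintype K] [DecidableEq K] [Nonempty S'] [Nonempty K]
    (h' : S' → X → K) (hUHF' : StrongUHF h') {x y : X} (hxy : x ≠ y) :
    ∑ s' : S', (if h' s' x = h' s' y then (1:ℝ) else 0)
      = (Fintype.card S' : ℝ) / (Fintype.card K : ℝ) := by
  have hN : (0:ℝ) < (Fintype.card K : ℝ) := by
    exact_mod_cast Fintype.card_pos
  have hS : (0:ℝ) < (Fintype.card S' : ℝ) := by
    exact_mod_cast Fintype.card_pos
  have hstep : ∀ s' : S', (if h' s' x = h' s' y then (1:ℝ) else 0)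
      = ∑ b : K, if h' s' x = b ∧ h' s' y = b then (1:ℝ) else 0 := by
    intro s'
    rcases eq_or_ne (h' s' x) (h' s' y) with he | hne
    · rw [if_pos he, he]
      simp
    · rw [if_neg hne]
      symm
      apply Finset.sum_eq_zero
      intro b _
      rw [if_neg]
      rintro ⟨h1, h2⟩
      exact hne (h1.trans h2.symm)
  simp_rw [hstep]
  rw [Finset.sum_comm]
  have hcard : ∀ b : K, ∑ s' : S', (if h' s' x = b ∧ h' s' y = b then (1:ℝ) else 0)
      = (Fintype.card S' : ℝ) / (Fintype.card K : ℝ) ^ 2 := by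
    intro b
    have huhf := hUHF' x y hxy b b
    rw [Finset.sum_boole]
    rw [div_eq_div_iff hS.ne' (by positivity)] at huhf
    rw [one_mul] at huhf
    rw [eq_div_iff (by positivity), ← huhf]
    congr 3
    exact (Finset.filter_congr_decidable _ _ _).trans
      (Finset.filter_congr_decidable _ _ _).symm
  simp_rw [hcard]
  rw [Finset.sum_const, Finset.card_univ, nsmul_eq_mul]
  field_simp

private lemma uhf_second_moment {S' X K : Type*} [Fintype S'] [Fintype X] [Fintype K]
    [DecidableEq K] [Nonempty S'] [Nonempty K]
    (h' : S' → X → K) (hUHF' : StrongUHF h') (c : X → ℝ) (hc : ∀ x, 0 ≤ c x) :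
    ∑ s' : S', ∑ k : K,
        (∑ x : X, c x * (if h' s' x = k then (1:ℝ) else 0)
          - (∑ x : X, c x) / (Fintype.card K : ℝ)) ^ 2
      ≤ (Fintype.card S' : ℝ) * ∑ x : X, c x ^ 2 := by
  have hN : (0:ℝ) < (Fintype.card K : ℝ) := by exact_mod_cast Fintype.card_pos
  have hS : (0:ℝ) < (Fintype.card S' : ℝ) := by exact_mod_cast Fintype.card_pos
  set N : ℝ := (Fintype.card K : ℝ) with hNdef
  set q' : ℝ := (Fintype.card S' : ℝ) with hq'def
  set m : ℝ := ∑ x : X, c x with hmdef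
  -- each row sums to m
  have hsumA : ∀ s' : S',
      ∑ k : K, ∑ x : X, c x * (if h' s' x = k then (1:ℝ) else 0) = m := by
    intro s'
    rw [Finset.sum_comm]
    simp_rw [← Finset.mul_sum, Finset.sum_ite_eq, Finset.mem_univ, if_true, mul_one]
    rfl
  -- collision counting
  have hcount : ∀ x y : X,
      ∑ s' : S', (if h' s' x = h' s' y then (1:ℝ) else 0)
        = if x = y then q' else q' / N := by
    intro x y
    rcases eq_or_ne x y with rfl | hxy
    · simp [hq'def]
    · rw [if_neg hxy]
      exact uhf_count h' hUHF' hxy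
  -- second moment of rows
  have hsq : ∑ s' : S', ∑ k : K,
        (∑ x : X, c x * (if h' s' x = k then (1:ℝ) else 0)) ^ 2
      = (q' - q' / N) * (∑ x : X, c x ^ 2) + (q' / N) * m ^ 2 := by
    have step1 : ∀ s' : S',
        ∑ k : K, (∑ x : X, c x * (if h' s' x = k then (1:ℝ) else 0)) ^ 2
          = ∑ x : X, ∑ y : X, c x * c y * (if h' s' x = h' s' y then (1:ℝ) else 0) := by
      intro s'
      simp_rw [sq, Finset.sum_mul_sum]
      rw [Finset.sum_comm]
      refine Finset.sum_congr rfl fun x _ => ?_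
      rw [Finset.sum_comm]
      refine Finset.sum_congr rfl fun y _ => ?_
      have hre : ∀ k : K,
          (c x * (if h' s' x = k then (1:ℝ) else 0)) * (c y * (if h' s' y = k then (1:ℝ) else 0))
            = (c x * c y) * ((if h' s' x = k then (1:ℝ) else 0) * (if h' s' y = k then (1:ℝ) else 0)) :=
        fun k => by ring
      simp_rw [hre, ← Finset.mul_sum, sum_ite_ite_mul]
    simp_rw [step1]
    rw [Finset.sum_comm]
    have step2 : ∀ x : X,
        ∑ s' : S', ∑ y : X, c x * c y * (if h' s' x = h' s' y then (1:ℝ) else 0)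
          = ∑ y : X, (c x * c y) * (if x = y then q' else q' / N) := by
      intro x
      rw [Finset.sum_comm]
      refine Finset.sum_congr rfl fun y _ => ?_
      rw [← Finset.mul_sum, hcount x y]
    simp_rw [step2]
    have step3 : ∀ x y : X,
        (c x * c y) * (if x = y then q' else q' / N)
          = (c x * c y) * (q' / N) + (if x = y then (c x * c y) * (q' - q' / N) else 0) := by
      intro x y; split_ifs <;> ring
    simp_rw [step3, Finset.sum_add_distrib, Finset.sum_ite_eq, Finset.mem_univ, if_true]
    have h1 : ∀ x : X, ∑ y : X, c x * c y * (q' / N) = c x * m * (q' / N) := by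
      intro x
      rw [← Finset.sum_mul, ← Finset.mul_sum]
    have h2 : ∀ x : X, c x * c x * (q' - q' / N) = c x ^ 2 * (q' - q' / N) := fun x => by ring
    simp_rw [h1, h2]
    rw [← Finset.sum_mul, ← Finset.sum_mul, ← Finset.sum_mul, ← hmdef]
    ring
  -- put together
  have e1 : ∀ s' : S',
      ∑ k : K, (∑ x : X, c x * (if h' s' x = k then (1:ℝ) else 0) - m / N) ^ 2
        = (∑ k : K, (∑ x : X, c x * (if h' s' x = k then (1:ℝ) else 0)) ^ 2) - m ^ 2 / N := by
    intro s'
    have hexp : ∀ k : K,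
        (∑ x : X, c x * (if h' s' x = k then (1:ℝ) else 0) - m / N) ^ 2
          = (∑ x : X, c x * (if h' s' x = k then (1:ℝ) else 0)) ^ 2
            - 2 * (m / N) * (∑ x : X, c x * (if h' s' x = k then (1:ℝ) else 0)) + (m / N) ^ 2 :=
      fun k => by ring
    simp_rw [hexp, Finset.sum_add_distrib, Finset.sum_sub_distrib, ← Finset.mul_sum, hsumA s',
      Finset.sum_const, Finset.card_univ, nsmul_eq_mul, ← hNdef]
    field_simp
    ring
  simp_rw [e1, Finset.sum_sub_distrib, hsq, Finset.sum_const, Finset.card_univ, nsmul_eq_mul,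
    ← hq'def]
  have hc2 : (0:ℝ) ≤ ∑ x : X, c x ^ 2 := Finset.sum_nonneg fun x _ => sq_nonneg _
  have hm2 : (0:ℝ) ≤ m ^ 2 := sq_nonneg _
  have hqN : 0 ≤ q' / N := by positivity
  have hkey : q' * (m ^ 2 / N) = (q' / N) * m ^ 2 := by ring
  rw [hkey]
  nlinarith [mul_nonneg hqN hc2]

private lemma uhf_l1 {S' X K : Type*} [Fintype S'] [Fintype X] [Fintype K]
    [DecidableEq K] [Nonempty S'] [Nonempty K]
    (h' : S' → X → K) (hUHF' : StrongUHF h') (c : X → ℝ) (hc : ∀ x, 0 ≤ c x) :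
    ∑ s' : S', ∑ k : K,
        |∑ x : X, c x * (if h' s' x = k then (1:ℝ) else 0)
          - (∑ x : X, c x) / (Fintype.card K : ℝ)|
      ≤ (Fintype.card S' : ℝ) * Real.sqrt ((Fintype.card K : ℝ) * ∑ x : X, c x ^ 2) := by
  have hN : (0:ℝ) < (Fintype.card K : ℝ) := by exact_mod_cast Fintype.card_pos
  have hS : (0:ℝ) < (Fintype.card S' : ℝ) := by exact_mod_cast Fintype.card_pos
  set N : ℝ := (Fintype.card K : ℝ) with hNdef
  set q' : ℝ := (Fintype.card S' : ℝ) with hq'def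
  set D : S' → K → ℝ := fun s' k =>
    ∑ x : X, c x * (if h' s' x = k then (1:ℝ) else 0) - (∑ x : X, c x) / N with hDdef
  have cs : ∑ s' : S', ∑ k : K, |D s' k|
      ≤ Real.sqrt (q' * N) * Real.sqrt (∑ s' : S', ∑ k : K, (D s' k) ^ 2) := by
    have h0 := Real.sum_mul_le_sqrt_mul_sqrt (Finset.univ : Finset (S' × K))
      (fun _ => (1:ℝ)) (fun w => |D w.1 w.2|)
    simp only [one_mul, one_pow, sq_abs, Finset.sum_const, Finset.card_univ,
      Fintype.card_prod, nsmul_eq_mul, mul_one, Fintype.sum_prod_type, Nat.cast_mul] at h0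
    exact h0
  have hsm : ∑ s' : S', ∑ k : K, (D s' k) ^ 2 ≤ q' * ∑ x : X, c x ^ 2 :=
    uhf_second_moment h' hUHF' c hc
  have hc2 : (0:ℝ) ≤ ∑ x : X, c x ^ 2 := Finset.sum_nonneg fun x _ => sq_nonneg _
  calc ∑ s' : S', ∑ k : K, |D s' k|
      ≤ Real.sqrt (q' * N) * Real.sqrt (∑ s' : S', ∑ k : K, (D s' k) ^ 2) := cs
    _ ≤ Real.sqrt (q' * N) * Real.sqrt (q' * ∑ x : X, c x ^ 2) := by
        exact mul_le_mul_of_nonneg_left (Real.sqrt_le_sqrt hsm) (Real.sqrt_nonneg _)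
    _ = q' * Real.sqrt (N * ∑ x : X, c x ^ 2) := by
        rw [← Real.sqrt_mul (by positivity)]
        rw [show q' * N * (q' * ∑ x : X, c x ^ 2) = q' ^ 2 * (N * ∑ x : X, c x ^ 2) by ring]
        rw [Real.sqrt_mul (by positivity), Real.sqrt_sq hS.le]

end AuxLHL

set_option maxHeartbeats 2000000

/-- Theorem 1, IND-OT security of the OWSKA-based iKEM: if `0 < σ ≤ 1` and
`ℓ ≤ H̃∞(X|Z) − t + 2 log₂ σ + 2`, then the key `h′_{S′}(X)` is σ-indistinguishable from
uniform given the adversary's view `(Z, h_S(X), S, S′)`: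
`SD((Z, h_S(X), S, S′, h′_{S′}(X)); (Z, h_S(X), S, S′, U_ℓ)) ≤ σ`. -/
theorem owska_ikem_ind_ot
    {X Z S S' : Type*} [Fintype X] [Fintype Z] [Fintype S] [Fintype S']
    [Nonempty X] [Nonempty S] [Nonempty S']
    (t ℓ : ℕ)
    (h : S → X → (Fin t → Bool)) (h' : S' → X → (Fin ℓ → Bool))
    (hUHF : StrongUHF h) (hUHF' : StrongUHF h')
    (p : X × Z → ℝ) (hp : ∀ x, 0 ≤ p x) (hsum : ∑ x : X × Z, p x = 1)
    (σ : ℝ) (hσ0 : 0 < σ) (hσ1 : σ ≤ 1)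
    (hℓ : (ℓ : ℝ) ≤ Havg p - t + 2 * Real.logb 2 σ + 2) :
    SD
        -- distribution of (Z, h_S(X), S, S′, h′_{S′}(X))
        (fun w : Z × (Fin t → Bool) × S × S' × (Fin ℓ → Bool) =>
          (∑ x ∈ Finset.univ.filter
              (fun x : X => h w.2.2.1 x = w.2.1 ∧ h' w.2.2.2.1 x = w.2.2.2.2),
            p (x, w.1)) / ((Fintype.card S : ℝ) * Fintype.card S'))
        -- distribution of (Z, h_S(X), S, S′, U_ℓ)
        (fun w : Z × (Fin t → Bool) × S × S' × (Fin ℓ → Bool) =>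
          (∑ x ∈ Finset.univ.filter (fun x : X => h w.2.2.1 x = w.2.1), p (x, w.1))
            / ((Fintype.card S : ℝ) * Fintype.card S' * 2 ^ ℓ))
      ≤ σ := by
  classical
  set q : ℝ := (Fintype.card S : ℝ) with hqdef
  set q' : ℝ := (Fintype.card S' : ℝ) with hq'def
  set N : ℝ := (2:ℝ) ^ ℓ with hNdef
  have hq0 : (0:ℝ) < q := by rw [hqdef]; exact_mod_cast Fintype.card_pos
  have hq'0 : (0:ℝ) < q' := by rw [hq'def]; exact_mod_cast Fintype.card_pos
  have hN0 : (0:ℝ) < N := by rw [hNdef]; positivity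
  set T2 : ℝ := (2:ℝ) ^ t with hT2def
  have hT20 : (0:ℝ) < T2 := by rw [hT2def]; positivity
  have hcardK : ((Fintype.card (Fin ℓ → Bool)) : ℝ) = N := by
    rw [hNdef, Fintype.card_fun, Fintype.card_bool, Fintype.card_fin]; push_cast; ring
  have hcardY : ((Fintype.card (Fin t → Bool)) : ℝ) = T2 := by
    rw [hT2def, Fintype.card_fun, Fintype.card_bool, Fintype.card_fin]; push_cast; ring
  set M : Z → ℝ := fun z => Finset.univ.sup' Finset.univ_nonempty (fun x : X => p (x, z))
    with hMdef
  have hHavg : Havg p = - Real.logb 2 (∑ z : Z, M z) := by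
    simp only [hMdef]; rfl
  have hMle : ∀ z x, p (x, z) ≤ M z := fun z x =>
    Finset.le_sup' (fun x : X => p (x, z)) (Finset.mem_univ x)
  have hM0 : ∀ z, 0 ≤ M z := fun z =>
    le_trans (hp (Classical.arbitrary X, z)) (hMle z _)
  set c : Z → S → (Fin t → Bool) → X → ℝ :=
    fun z s y x => if h s x = y then p (x, z) else 0 with hcdef
  have hc0 : ∀ z s y x, 0 ≤ c z s y x := by
    intro z s y x; simp only [hcdef]; split_ifs; exacts [hp _, le_rfl]
  have hcle : ∀ z s y x, c z s y x ≤ M z := by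
    intro z s y x; simp only [hcdef]; split_ifs; exacts [hMle z x, hM0 z]
  have hPsum' : ∑ z : Z, ∑ x : X, p (x, z) = 1 := by
    have h1 := hsum
    rw [Fintype.sum_prod_type] at h1
    rw [Finset.sum_comm] at h1
    exact h1
  have hBP : ∀ (z : Z) (s : S), ∑ y : Fin t → Bool, ∑ x : X, c z s y x = ∑ x : X, p (x, z) := by
    intro z s
    rw [Finset.sum_comm]
    simp only [hcdef]
    simp_rw [Finset.sum_ite_eq, Finset.mem_univ, if_true]
  have hB0 : ∀ z s y, (0:ℝ) ≤ ∑ x : X, c z s y x :=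
    fun z s y => Finset.sum_nonneg fun x _ => hc0 z s y x
  have hBsq : ∀ z s y, ∑ x : X, (c z s y x) ^ 2 ≤ M z * ∑ x : X, c z s y x := by
    intro z s y
    rw [Finset.mul_sum]
    refine Finset.sum_le_sum fun x _ => ?_
    rw [sq]
    exact mul_le_mul_of_nonneg_right (hcle z s y x) (hc0 z s y x)
  have hnum1 : ∀ (z : Z) (y : Fin t → Bool) (s : S) (s' : S') (k : Fin ℓ → Bool),
      (∑ x ∈ Finset.univ.filter (fun x : X => h s x = y ∧ h' s' x = k), p (x, z))
        = ∑ x : X, c z s y x * (if h' s' x = k then (1:ℝ) else 0) := by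
    intro z y s s' k
    rw [Finset.sum_filter]
    refine Finset.sum_congr rfl fun x _ => ?_
    simp only [hcdef]
    by_cases h1 : h s x = y <;> by_cases h2 : h' s' x = k <;> simp [h1, h2]
  have hnum2 : ∀ (z : Z) (y : Fin t → Bool) (s : S),
      (∑ x ∈ Finset.univ.filter (fun x : X => h s x = y), p (x, z)) = ∑ x : X, c z s y x := by
    intro z y s
    rw [Finset.sum_filter]
  -- positivity of Kv
  have hKv0 : (0:ℝ) < ∑ z : Z, M z := by
    have hcX : (0:ℝ) < (Fintype.card X : ℝ) := by exact_mod_cast Fintype.card_pos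
    have h1 : (1:ℝ) ≤ (Fintype.card X : ℝ) * ∑ z : Z, M z := by
      rw [Finset.mul_sum, ← hPsum']
      refine Finset.sum_le_sum fun z _ => ?_
      calc ∑ x : X, p (x, z) ≤ ∑ _x : X, M z := Finset.sum_le_sum fun x _ => hMle z x
        _ = (Fintype.card X : ℝ) * M z := by
            rw [Finset.sum_const, Finset.card_univ, nsmul_eq_mul]
    nlinarith
  -- the key numeric bound
  have hfin : Real.sqrt N * Real.sqrt T2 * Real.sqrt (∑ z : Z, M z) ≤ 2 * σ := by
    rw [← Real.sqrt_mul hN0.le, ← Real.sqrt_mul (mul_nonneg hN0.le hT20.le)]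
    have hN' : N = (2:ℝ) ^ (ℓ:ℝ) := (Real.rpow_natCast 2 ℓ).symm
    have hT' : T2 = (2:ℝ) ^ (t:ℝ) := (Real.rpow_natCast 2 t).symm
    have hKv' : (∑ z : Z, M z) = (2:ℝ) ^ (Real.logb 2 (∑ z : Z, M z)) :=
      (Real.rpow_logb (by norm_num) (by norm_num) hKv0).symm
    have hexp : (ℓ:ℝ) + (t:ℝ) + Real.logb 2 (∑ z : Z, M z) ≤ 2 * Real.logb 2 σ + 2 := by
      rw [hHavg] at hℓ; linarith
    have hNTK : N * T2 * (∑ z : Z, M z) ≤ 4 * σ ^ 2 := by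
      calc N * T2 * (∑ z : Z, M z)
          = (2:ℝ) ^ ((ℓ:ℝ) + (t:ℝ) + Real.logb 2 (∑ z : Z, M z)) := by
            rw [Real.rpow_add (by norm_num : (0:ℝ) < 2),
              Real.rpow_add (by norm_num : (0:ℝ) < 2), ← hN', ← hT', ← hKv']
        _ ≤ (2:ℝ) ^ (2 * Real.logb 2 σ + 2) :=
            Real.rpow_le_rpow_of_exponent_le (by norm_num) hexp
        _ = 4 * σ ^ 2 := by
            rw [show 2 * Real.logb 2 σ + 2
                = Real.logb 2 σ + (Real.logb 2 σ + ((1:ℝ) + 1)) by ring]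
            rw [Real.rpow_add (by norm_num : (0:ℝ) < 2),
              Real.rpow_add (by norm_num : (0:ℝ) < 2),
              Real.rpow_add (by norm_num : (0:ℝ) < 2), Real.rpow_one,
              Real.rpow_logb (by norm_num) (by norm_num) hσ0]
            ring
    calc Real.sqrt (N * T2 * (∑ z : Z, M z)) ≤ Real.sqrt (4 * σ ^ 2) :=
          Real.sqrt_le_sqrt hNTK
      _ = 2 * σ := by
          rw [show (4:ℝ) * σ ^ 2 = (2 * σ) ^ 2 by ring, Real.sqrt_sq (by positivity)]
  refine le_trans (SD_le_half_l1 _ _ ?hpq) ?hmain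
  case hpq =>
    simp only [Fintype.sum_prod_type]
    refine Finset.sum_congr rfl fun z _ => Finset.sum_congr rfl fun y _ =>
      Finset.sum_congr rfl fun s _ => Finset.sum_congr rfl fun s' _ => ?_
    simp_rw [hnum1, hnum2]
    conv_lhs => rw [← Finset.sum_div, Finset.sum_comm]
    conv_rhs => rw [← Finset.sum_div, Finset.sum_const, Finset.card_univ]
    simp_rw [← Finset.mul_sum, Finset.sum_ite_eq, Finset.mem_univ, if_true, mul_one]
    rw [nsmul_eq_mul, hcardK]
    field_simp
  case hmain =>
    rw [div_le_iff₀ (by norm_num : (0:ℝ) < 2)]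
    simp only [Fintype.sum_prod_type]
    simp_rw [hnum1, hnum2]
    have habs : ∀ a b : ℝ, |a / (q * q') - b / (q * q' * N)| = |a - b / N| / (q * q') := by
      intro a b
      rw [show a / (q * q') - b / (q * q' * N) = (a - b / N) / (q * q') by
        field_simp]
      rw [abs_div, abs_of_pos (mul_pos hq0 hq'0)]
    simp_rw [habs, ← Finset.sum_div]
    rw [div_le_iff₀ (mul_pos hq0 hq'0)]
    calc ∑ z : Z, ∑ y : Fin t → Bool, ∑ s : S, ∑ s' : S', ∑ k : Fin ℓ → Bool,
          |∑ x : X, c z s y x * (if h' s' x = k then (1:ℝ) else 0)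
            - (∑ x : X, c z s y x) / N|
        ≤ ∑ z : Z, ∑ y : Fin t → Bool, ∑ s : S,
            (q' * (Real.sqrt (N * M z) * Real.sqrt (∑ x : X, c z s y x))) := by
          refine Finset.sum_le_sum fun z _ => Finset.sum_le_sum fun y _ =>
            Finset.sum_le_sum fun s _ => ?_
          have h1 := uhf_l1 h' hUHF' (c z s y) (hc0 z s y)
          rw [hcardK] at h1
          refine h1.trans ?_
          have h2 : N * (∑ x : X, (c z s y x) ^ 2) ≤ (N * M z) * (∑ x : X, c z s y x) := by
            have h3 := hBsq z s y
            have := mul_le_mul_of_nonneg_left h3 hN0.le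
            nlinarith
          calc q' * Real.sqrt (N * ∑ x : X, (c z s y x) ^ 2)
              ≤ q' * Real.sqrt ((N * M z) * (∑ x : X, c z s y x)) :=
                mul_le_mul_of_nonneg_left (Real.sqrt_le_sqrt h2) hq'0.le
            _ = q' * (Real.sqrt (N * M z) * Real.sqrt (∑ x : X, c z s y x)) := by
                rw [Real.sqrt_mul (mul_nonneg hN0.le (hM0 z))]
      _ = ∑ z : Z, (q' * Real.sqrt (N * M z)
            * ∑ s : S, ∑ y : Fin t → Bool, Real.sqrt (∑ x : X, c z s y x)) := by
          refine Finset.sum_congr rfl fun z _ => ?_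
          rw [Finset.sum_comm]
          simp_rw [← mul_assoc, ← Finset.mul_sum]
      _ ≤ ∑ z : Z, (q' * Real.sqrt (N * M z)
            * (q * (Real.sqrt T2 * Real.sqrt (∑ x : X, p (x, z))))) := by
          refine Finset.sum_le_sum fun z _ => ?_
          refine mul_le_mul_of_nonneg_left ?_
            (mul_nonneg hq'0.le (Real.sqrt_nonneg _))
          calc ∑ s : S, ∑ y : Fin t → Bool, Real.sqrt (∑ x : X, c z s y x)
              ≤ ∑ _s : S, (Real.sqrt T2 * Real.sqrt (∑ x : X, p (x, z))) := by
                refine Finset.sum_le_sum fun s _ => ?_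
                have hcs := Real.sum_sqrt_mul_sqrt_le (Finset.univ : Finset (Fin t → Bool))
                  (f := fun _ => (1:ℝ)) (g := fun y => ∑ x : X, c z s y x)
                  (fun _ => by norm_num) (fun y => hB0 z s y)
                simp only [Real.sqrt_one, one_mul, Finset.sum_const, Finset.card_univ,
                  nsmul_eq_mul, mul_one] at hcs
                rw [hcardY, hBP z s] at hcs
                exact hcs
            _ = q * (Real.sqrt T2 * Real.sqrt (∑ x : X, p (x, z))) := by
                rw [Finset.sum_const, Finset.card_univ, nsmul_eq_mul, hqdef]
      _ = (q * q') * (Real.sqrt N * Real.sqrt T2)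
            * ∑ z : Z, (Real.sqrt (M z) * Real.sqrt (∑ x : X, p (x, z))) := by
          rw [Finset.mul_sum]
          refine Finset.sum_congr rfl fun z _ => ?_
          rw [Real.sqrt_mul hN0.le]
          ring
      _ ≤ (q * q') * (Real.sqrt N * Real.sqrt T2)
            * (Real.sqrt (∑ z : Z, M z) * Real.sqrt (∑ z : Z, ∑ x : X, p (x, z))) := by
          refine mul_le_mul_of_nonneg_left ?_
            (mul_nonneg (mul_nonneg hq0.le hq'0.le)
              (mul_nonneg (Real.sqrt_nonneg _) (Real.sqrt_nonneg _)))
          exact Real.sum_sqrt_mul_sqrt_le _ (fun z => hM0 z)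
            (fun z => Finset.sum_nonneg fun x _ => hp _)
      _ = (q * q') * (Real.sqrt N * Real.sqrt T2 * Real.sqrt (∑ z : Z, M z)) := by
          rw [hPsum', Real.sqrt_one, mul_one]
          ring
      _ ≤ σ * 2 * (q * q') := by
          calc (q * q') * (Real.sqrt N * Real.sqrt T2 * Real.sqrt (∑ z : Z, M z))
              ≤ (q * q') * (2 * σ) :=
                mul_le_mul_of_nonneg_left hfin (mul_nonneg hq0.le hq'0.le)
            _ = σ * 2 * (q * q') := by ring
end

section
/- (Composition theorem: IND-q_e-CEA iKEM + IND-OT DEM ⇒ IND-q_e-CPA hybrid encryption.) Let (X, Z) be jointly distributed random variables on finite sets, let R₁, …, R_{q_e+1} be i.i.d. uniform on a finite set ℛ and independent of (X, Z), and let Enc : 𝒳 × ℛ → 𝒞₁ × {0,1}^ℓ be the iKEM encapsulation; write (C₁ⁱ, Kⁱ) = Enc(X, Rᵢ) for i = 1, …, q_e and (C₁*, K*) = Enc(X, R_{q_e+1}). Let D : {0,1}^ℓ × ℳ → 𝒞₂ be a deterministic DEM encryption over a finite message set ℳ. Consider an adaptive adversary specified by functions g₁ : 𝒵 → ℳ and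 gᵢ : 𝒵 × (𝒞₁ × 𝒞₂)^{i−1} → ℳ for i = 2, …, q_e (choosing the i-th encryption-oracle query message mᵢ from Z and previous responses), where the i-th oracle response is (C₁ⁱ, D(Kⁱ, mᵢ)); by A₁ : 𝒵 × (𝒞₁ × 𝒞₂)^{q_e} → ℳ × ℳ × 𝒮t choosing the challenge message pair and state (m₀, m₁, st); and by A₂ : 𝒮t × 𝒞₁ × 𝒞₂ → {0,1}. Assume: (i) SD((Z, C₁*, K*, V); (Z, C₁*, U_ℓ, V)) ≤ σ, where V = ((C₁ⁱ, Kⁱ))_{i=1,…,q_e} and U_ℓ is uniform on {0,1}^ℓ independent of everything else; and (ii) for all m₀, m₁ ∈ ℳ and every function f : 𝒞₂ → {0,1}, |Pr_{k ← U_ℓ, b ← U_1}[f(D(k, m_b)) = b] − 1/2| ≤ σ′. Then for a uniform bit b independent of everything else, |Pr[A₂(st, C₁*, D(K*, m_b)) = b] − 1/2| ≤ σ + σ′. -/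
open scoped BigOperators Classical

/-- Responses of the adaptive encryption oracle: the `i`-th query message is chosen by
`g i` from the side information `z` and the previous `i − 1` responses, and the `i`-th
response is `(C₁ⁱ, D(Kⁱ, mᵢ))` where `(C₁ⁱ, Kⁱ) = Enc(x, rᵢ)` uses fresh randomness `rᵢ`. -/
noncomputable def resps {𝒳 𝒵 ℛ 𝒞₁ 𝒞₂ ℳ K : Type*} {qe : ℕ}
    (Enc : 𝒳 × ℛ → 𝒞₁ × K) (D : K → ℳ → 𝒞₂)
    (g : (i : Fin qe) → 𝒵 × (Fin i → 𝒞₁ × 𝒞₂) → ℳ)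
    (x : 𝒳) (z : 𝒵) (r : Fin qe → ℛ) : Fin qe → 𝒞₁ × 𝒞₂
  | i =>
    let m := g i (z, fun j => resps Enc D g x z r ⟨j.1, j.2.trans i.2⟩)
    ((Enc (x, r i)).1, D (Enc (x, r i)).2 m)
  termination_by i => i.1

/-- Auxiliary: a bounded test function of the joint view cannot distinguish better than SD. -/
lemma abs_sum_mul_sub_le_SD {T : Type*} [Fintype T] (p q F : T → ℝ)
    (hpq : ∑ t, p t = ∑ t, q t)
    (hF0 : ∀ t, 0 ≤ F t) (hF1 : ∀ t, F t ≤ 1) :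
    |∑ t, p t * F t - ∑ t, q t * F t| ≤ SD p q := by
  classical
  set W : Finset T := Finset.univ.filter (fun t => q t ≤ p t) with hWdef
  have hW : ∑ t ∈ W, p t - ∑ t ∈ W, q t ≤ SD p q :=
    Finset.le_sup' (fun W : Finset T => ∑ t ∈ W, p t - ∑ t ∈ W, q t) (Finset.mem_univ W)
  have hsplit : ∀ f : T → ℝ, ∑ t, f t = ∑ t ∈ W, f t + ∑ t ∈ Finset.univ.filter (fun t => ¬ q t ≤ p t), f t := by
    intro f
    rw [← Finset.sum_filter_add_sum_filter_not Finset.univ (fun t => q t ≤ p t) f]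
  have key : ∑ t, p t * F t - ∑ t, q t * F t = ∑ t, (p t - q t) * F t := by
    rw [← Finset.sum_sub_distrib]; congr 1; ext t; ring
  rw [key, abs_le]
  constructor
  · have h1 : ∑ t ∈ Finset.univ.filter (fun t => ¬ q t ≤ p t), (p t - q t) ≤ ∑ t, (p t - q t) * F t := by
      rw [hsplit (fun t => (p t - q t) * F t)]
      have a1 : (0:ℝ) ≤ ∑ t ∈ W, (p t - q t) * F t := by
        apply Finset.sum_nonneg; intro t ht
        have := (Finset.mem_filter.mp ht).2
        exact mul_nonneg (by linarith) (hF0 t)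
      have a2 : ∑ t ∈ Finset.univ.filter (fun t => ¬ q t ≤ p t), (p t - q t)
          ≤ ∑ t ∈ Finset.univ.filter (fun t => ¬ q t ≤ p t), (p t - q t) * F t := by
        apply Finset.sum_le_sum; intro t ht
        have := (Finset.mem_filter.mp ht).2
        nlinarith [hF1 t, hF0 t]
      linarith
    have h2 : ∑ t ∈ Finset.univ.filter (fun t => ¬ q t ≤ p t), (p t - q t)
        = -(∑ t ∈ W, p t - ∑ t ∈ W, q t) := by
      have := hsplit (fun t => p t - q t)
      have htot : ∑ t, (p t - q t) = 0 := by rw [Finset.sum_sub_distrib, hpq]; ring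
      simp only [Finset.sum_sub_distrib] at this ⊢
      rw [Finset.sum_sub_distrib] at htot
      linarith
    linarith
  · have h1 : ∑ t, (p t - q t) * F t ≤ ∑ t ∈ W, (p t - q t) := by
      rw [hsplit (fun t => (p t - q t) * F t)]
      have a1 : ∑ t ∈ W, (p t - q t) * F t ≤ ∑ t ∈ W, (p t - q t) := by
        apply Finset.sum_le_sum; intro t ht
        have := (Finset.mem_filter.mp ht).2
        nlinarith [hF1 t, hF0 t]
      have a2 : ∑ t ∈ Finset.univ.filter (fun t => ¬ q t ≤ p t), (p t - q t) * F t ≤ 0 := by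
        apply Finset.sum_nonpos; intro t ht
        have := (Finset.mem_filter.mp ht).2
        nlinarith [hF0 t]
      linarith
    rw [Finset.sum_sub_distrib] at h1
    linarith

/-- Auxiliary: the oracle responses only depend on the key–ciphertext pairs `Enc (x, rᵢ)`. -/
lemma resps_eq {𝒳 𝒵 ℛ 𝒞₁ 𝒞₂ ℳ K : Type*} {qe : ℕ}
    (Enc : 𝒳 × ℛ → 𝒞₁ × K) (D : K → ℳ → 𝒞₂)
    (g : (i : Fin qe) → 𝒵 × (Fin i → 𝒞₁ × 𝒞₂) → ℳ)
    (x : 𝒳) (z : 𝒵) (r : Fin qe → ℛ) :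
    resps Enc D g x z r
      = resps (Prod.snd : Unit × (𝒞₁ × K) → 𝒞₁ × K) D g () z (fun i => Enc (x, r i)) := by
  suffices h : ∀ n (hn : n < qe), resps Enc D g x z r ⟨n, hn⟩
      = resps (Prod.snd : Unit × (𝒞₁ × K) → 𝒞₁ × K) D g () z (fun i => Enc (x, r i)) ⟨n, hn⟩ by
    funext i
    exact h i.1 i.2
  intro n
  induction n using Nat.strong_induction_on with
  | _ n ih =>
    intro hn
    rw [resps, resps]
    simp only
    have harg : (fun j : Fin ((⟨n, hn⟩ : Fin qe) : ℕ) =>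
          resps Enc D g x z r ⟨j.1, j.2.trans (⟨n, hn⟩ : Fin qe).2⟩)
        = (fun j : Fin ((⟨n, hn⟩ : Fin qe) : ℕ) =>
          resps (Prod.snd : Unit × (𝒞₁ × K) → 𝒞₁ × K) D g () z (fun i => Enc (x, r i))
            ⟨j.1, j.2.trans (⟨n, hn⟩ : Fin qe).2⟩) :=
      funext fun j => ih j.1 j.2 _
    rw [harg]

/-- Auxiliary: the adversary's success probability as a function of the view
`(z, c₁*, k*, v)`, with the oracle responses recomputed from the raw pairs `v`. -/
noncomputable def advF {𝒵 𝒞₁ 𝒞₂ ℳ 𝒮t K : Type*} {qe : ℕ}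
    (D : K → ℳ → 𝒞₂)
    (g : (i : Fin qe) → 𝒵 × (Fin i → 𝒞₁ × 𝒞₂) → ℳ)
    (A₁ : 𝒵 × (Fin qe → 𝒞₁ × 𝒞₂) → ℳ × ℳ × 𝒮t)
    (A₂ : 𝒮t × 𝒞₁ × 𝒞₂ → Bool) :
    𝒵 × 𝒞₁ × K × (Fin qe → 𝒞₁ × K) → ℝ := fun w =>
  let v := resps (Prod.snd : Unit × (𝒞₁ × K) → 𝒞₁ × K) D g () w.1 w.2.2.2
  let a := A₁ (w.1, v)
  (1 / 2) * (if A₂ (a.2.2, w.2.1, D w.2.2.1 a.1) = false then 1 else 0)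
    + (1 / 2) * (if A₂ (a.2.2, w.2.1, D w.2.2.1 a.2.1) = true then 1 else 0)

lemma advF_nonneg {𝒵 𝒞₁ 𝒞₂ ℳ 𝒮t K : Type*} {qe : ℕ}
    (D : K → ℳ → 𝒞₂) (g : (i : Fin qe) → 𝒵 × (Fin i → 𝒞₁ × 𝒞₂) → ℳ)
    (A₁ : 𝒵 × (Fin qe → 𝒞₁ × 𝒞₂) → ℳ × ℳ × 𝒮t) (A₂ : 𝒮t × 𝒞₁ × 𝒞₂ → Bool)
    (w : 𝒵 × 𝒞₁ × K × (Fin qe → 𝒞₁ × K)) : 0 ≤ advF D g A₁ A₂ w := by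
  simp only [advF]
  split_ifs <;> norm_num

lemma advF_le_one {𝒵 𝒞₁ 𝒞₂ ℳ 𝒮t K : Type*} {qe : ℕ}
    (D : K → ℳ → 𝒞₂) (g : (i : Fin qe) → 𝒵 × (Fin i → 𝒞₁ × 𝒞₂) → ℳ)
    (A₁ : 𝒵 × (Fin qe → 𝒞₁ × 𝒞₂) → ℳ × ℳ × 𝒮t) (A₂ : 𝒮t × 𝒞₁ × 𝒞₂ → Bool)
    (w : 𝒵 × 𝒞₁ × K × (Fin qe → 𝒞₁ × K)) : advF D g A₁ A₂ w ≤ 1 := by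
  simp only [advF]
  split_ifs <;> norm_num

/-- Auxiliary: interchange of summation. -/
lemma sum_swap3 {Ω X R : Type*} [Fintype Ω] [Fintype X] [Fintype R]
    (T : X → R → Ω → ℝ) (F : Ω → ℝ) :
    ∑ w : Ω, (∑ x : X, ∑ rv : R, T x rv w) * F w
      = ∑ x : X, ∑ rv : R, ∑ w : Ω, T x rv w * F w := by
  simp only [Finset.sum_mul]
  rw [Finset.sum_comm]
  exact Finset.sum_congr rfl fun x _ => Finset.sum_comm

/-- Auxiliary: collapsing a point-mass indicator. -/
lemma sum_collapse_real {Z Y : Type*} [Fintype Z] [Fintype Y]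
    (cond : Y → Prop) [DecidablePred cond] (y₀ : Y) (h : ∀ y, cond y ↔ y = y₀)
    (c : Z → ℝ) (F : Z × Y → ℝ) :
    ∑ w : Z × Y, (c w.1 * (if cond w.2 then 1 else 0)) * F w
      = ∑ z : Z, c z * F (z, y₀) := by
  rw [Fintype.sum_prod_type]
  refine Finset.sum_congr rfl fun z _ => ?_
  rw [Finset.sum_eq_single_of_mem y₀ (Finset.mem_univ _)]
  · simp [h]
  · intro y _ hy; simp [h, hy]

/-- Auxiliary: collapsing an indicator that leaves the key component free. -/
lemma sum_collapse_ideal {Z A B C : Type*} [Fintype Z] [Fintype A] [Fintype B] [Fintype C]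
    (condA : A → Prop) [DecidablePred condA] (a₀ : A) (hA : ∀ a, condA a ↔ a = a₀)
    (condC : C → Prop) [DecidablePred condC] (c₀ : C) (hC : ∀ c, condC c ↔ c = c₀)
    (c : Z → ℝ) (F : Z × A × B × C → ℝ) :
    ∑ w : Z × A × B × C, (c w.1 * (if condA w.2.1 ∧ condC w.2.2.2 then 1 else 0)) * F w
      = ∑ z : Z, c z * ∑ b : B, F (z, a₀, b, c₀) := by
  rw [Fintype.sum_prod_type]
  refine Finset.sum_congr rfl fun z _ => ?_
  rw [Fintype.sum_prod_type]
  rw [Finset.sum_eq_single_of_mem a₀ (Finset.mem_univ _)]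
  · rw [Fintype.sum_prod_type, Finset.mul_sum]
    refine Finset.sum_congr rfl fun b _ => ?_
    rw [Finset.sum_eq_single_of_mem c₀ (Finset.mem_univ _)]
    · simp [hA, hC]
    · intro cc _ hcc; simp [hC, hcc]
  · intro a _ ha; simp [hA, ha]

/-- Auxiliary: convex combination of quantities each `σ'`-close to `1/2` is `σ'`-close to `1/2`. -/
lemma triple_weight_bound {X R Z : Type*} [Fintype X] [Fintype R] [Fintype Z]
    (wgt : X → Z → ℝ) (hw : ∀ x z, 0 ≤ wgt x z)
    (hw1 : ∑ x : X, ∑ rv : R, ∑ z : Z, wgt x z = 1)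
    (inner : X → R → Z → ℝ) (σ' : ℝ)
    (hin : ∀ x rv z, |inner x rv z - 1/2| ≤ σ') :
    |(∑ x : X, ∑ rv : R, ∑ z : Z, wgt x z * inner x rv z) - 1/2| ≤ σ' := by
  have key : (∑ x : X, ∑ rv : R, ∑ z : Z, wgt x z * inner x rv z) - 1/2
      = ∑ x : X, ∑ rv : R, ∑ z : Z, wgt x z * (inner x rv z - 1/2) := by
    simp only [mul_sub, Finset.sum_sub_distrib]
    have : ∑ x : X, ∑ rv : R, ∑ z : Z, wgt x z * (1/2 : ℝ)
        = (∑ x : X, ∑ rv : R, ∑ z : Z, wgt x z) * (1/2 : ℝ) := by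
      simp only [Finset.sum_mul]
    rw [this, hw1, one_mul]
  rw [key]
  have hterm : ∀ x rv z, |wgt x z * (inner x rv z - 1/2)| ≤ wgt x z * σ' := by
    intro x rv z
    rw [abs_mul, abs_of_nonneg (hw x z)]
    exact mul_le_mul_of_nonneg_left (hin x rv z) (hw x z)
  refine le_trans (Finset.abs_sum_le_sum_abs _ _) ?_
  have h2 : ∑ x : X, |∑ rv : R, ∑ z : Z, wgt x z * (inner x rv z - 1/2)|
      ≤ ∑ x : X, ∑ rv : R, ∑ z : Z, wgt x z * σ' := by
    refine Finset.sum_le_sum fun x _ => le_trans (Finset.abs_sum_le_sum_abs _ _) ?_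
    refine Finset.sum_le_sum fun rv _ => le_trans (Finset.abs_sum_le_sum_abs _ _) ?_
    exact Finset.sum_le_sum fun z _ => hterm x rv z
  refine le_trans h2 ?_
  have : ∑ x : X, ∑ rv : R, ∑ z : Z, wgt x z * σ' = σ' := by
    simp only [← Finset.sum_mul]
    rw [hw1, one_mul]
  rw [this]

/-- composition theorem: IND-q_e-CEA iKEM + IND-OT DEM ⇒ IND-q_e-CPA hybrid
encryption: if the challenge key `K*` is σ-close to uniform given the side information, the
challenge ciphertext and the `q_e` query key–ciphertext pairs `V`, and the DEM is σ′-one-time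
secure, then every adaptive `q_e`-query CPA adversary `(g, A₁, A₂)` against the hybrid
encryption has advantage at most `σ + σ′`. -/
theorem hybrid_encryption_ind_qe_cpa
    {𝒳 𝒵 ℛ 𝒞₁ 𝒞₂ ℳ 𝒮t : Type*}
    [Fintype 𝒳] [Fintype 𝒵] [Fintype ℛ] [Fintype 𝒞₁] [Fintype 𝒞₂] [Fintype ℳ] [Fintype 𝒮t]
    [Nonempty ℛ]
    (ℓ qe : ℕ)
    (Enc : 𝒳 × ℛ → 𝒞₁ × (Fin ℓ → Bool))  -- iKEM encapsulation
    (D : (Fin ℓ → Bool) → ℳ → 𝒞₂)        -- deterministic DEM encryption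
    (p : 𝒳 × 𝒵 → ℝ) (hp : ∀ w, 0 ≤ p w) (hsum : ∑ w : 𝒳 × 𝒵, p w = 1)
    (σ σ' : ℝ)
    -- (i) IND-q_e-CEA security of the iKEM: SD((Z, C₁*, K*, V); (Z, C₁*, U_ℓ, V)) ≤ σ
    (hKEM : SD
      (fun w : 𝒵 × 𝒞₁ × (Fin ℓ → Bool) × (Fin qe → 𝒞₁ × (Fin ℓ → Bool)) =>
        ∑ x : 𝒳, ∑ rv : Fin (qe + 1) → ℛ,
          (p (x, w.1) / (Fintype.card ℛ : ℝ) ^ (qe + 1)) *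
            (if Enc (x, rv (Fin.last qe)) = (w.2.1, w.2.2.1)
                ∧ (∀ i : Fin qe, w.2.2.2 i = Enc (x, rv i.castSucc))
              then 1 else 0))
      (fun w : 𝒵 × 𝒞₁ × (Fin ℓ → Bool) × (Fin qe → 𝒞₁ × (Fin ℓ → Bool)) =>
        ∑ x : 𝒳, ∑ rv : Fin (qe + 1) → ℛ,
          (p (x, w.1) / ((Fintype.card ℛ : ℝ) ^ (qe + 1) * 2 ^ ℓ)) *
            (if (Enc (x, rv (Fin.last qe))).1 = w.2.1
                ∧ (∀ i : Fin qe, w.2.2.2 i = Enc (x, rv i.castSucc))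
              then 1 else 0))
      ≤ σ)
    -- (ii) IND-OT security of the DEM under a uniform key
    (hDEM : ∀ m₀ m₁ : ℳ, ∀ f : 𝒞₂ → Bool,
      |(∑ k : Fin ℓ → Bool, (1 / (2 ^ ℓ : ℝ)) *
          ((1 / 2) * (if f (D k m₀) = false then 1 else 0)
            + (1 / 2) * (if f (D k m₁) = true then 1 else 0))) - 1 / 2| ≤ σ') :
    -- conclusion: every adaptive q_e-query CPA adversary has advantage ≤ σ + σ'
    ∀ (g : (i : Fin qe) → 𝒵 × (Fin i → 𝒞₁ × 𝒞₂) → ℳ)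
      (A₁ : 𝒵 × (Fin qe → 𝒞₁ × 𝒞₂) → ℳ × ℳ × 𝒮t)
      (A₂ : 𝒮t × 𝒞₁ × 𝒞₂ → Bool),
      |(∑ x : 𝒳, ∑ z : 𝒵, ∑ rv : Fin (qe + 1) → ℛ,
          (p (x, z) / (Fintype.card ℛ : ℝ) ^ (qe + 1)) *
            (let v := resps Enc D g x z (fun i => rv i.castSucc)
             let a := A₁ (z, v)
             let ck := Enc (x, rv (Fin.last qe))
             (1 / 2) * (if A₂ (a.2.2, ck.1, D ck.2 a.1) = false then 1 else 0)
               + (1 / 2) * (if A₂ (a.2.2, ck.1, D ck.2 a.2.1) = true then 1 else 0)))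
        - 1 / 2| ≤ σ + σ' := by
  intro g A₁ A₂
  classical
  have hR0 : (0:ℝ) < (Fintype.card ℛ : ℝ) := by exact_mod_cast Fintype.card_pos
  have hRne : ((Fintype.card ℛ : ℝ) ^ (qe + 1)) ≠ 0 := by positivity
  have h2ne : ((2:ℝ) ^ ℓ) ≠ 0 := by positivity
  -- the point-mass condition for the real distribution
  have hcond : ∀ (x : 𝒳) (rv : Fin (qe + 1) → ℛ)
      (y : 𝒞₁ × (Fin ℓ → Bool) × (Fin qe → 𝒞₁ × (Fin ℓ → Bool))),
      (Enc (x, rv (Fin.last qe)) = (y.1, y.2.1) ∧ ∀ i : Fin qe, y.2.2 i = Enc (x, rv i.castSucc))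
        ↔ y = ((Enc (x, rv (Fin.last qe))).1, (Enc (x, rv (Fin.last qe))).2, fun i => Enc (x, rv i.castSucc)) := by
    rintro x rv ⟨c, k, v⟩
    constructor
    · rintro ⟨h1, h2⟩
      have hc : (Enc (x, rv (Fin.last qe))).1 = c := by rw [h1]
      have hk : (Enc (x, rv (Fin.last qe))).2 = k := by rw [h1]
      subst hc
      subst hk
      exact congrArg (fun v' => ((Enc (x, rv (Fin.last qe))).1, (Enc (x, rv (Fin.last qe))).2, v'))
        (funext h2)
    · intro h
      obtain ⟨h1, h2, h3⟩ : c = (Enc (x, rv (Fin.last qe))).1 ∧ k = (Enc (x, rv (Fin.last qe))).2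
          ∧ v = fun i => Enc (x, rv i.castSucc) := by simpa [Prod.ext_iff] using h
      subst h1
      subst h2
      subst h3
      exact ⟨Prod.mk.eta.symm, fun i => rfl⟩
  have hA : ∀ (x : 𝒳) (rv : Fin (qe + 1) → ℛ) (a : 𝒞₁),
      ((Enc (x, rv (Fin.last qe))).1 = a) ↔ a = (Enc (x, rv (Fin.last qe))).1 :=
    fun x rv a => eq_comm
  have hC : ∀ (x : 𝒳) (rv : Fin (qe + 1) → ℛ) (v : Fin qe → 𝒞₁ × (Fin ℓ → Bool)),
      (∀ i : Fin qe, v i = Enc (x, rv i.castSucc)) ↔ v = fun i => Enc (x, rv i.castSucc) :=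
    fun x rv v => Iff.symm funext_iff
  -- the weights sum to one
  have hcard : (Fintype.card (Fin (qe + 1) → ℛ) : ℝ) = (Fintype.card ℛ : ℝ) ^ (qe + 1) := by
    rw [Fintype.card_fun]
    push_cast [Fintype.card_fin]
    ring
  have hw1 : ∑ x : 𝒳, ∑ rv : Fin (qe + 1) → ℛ, ∑ z : 𝒵, p (x, z) / (Fintype.card ℛ : ℝ) ^ (qe + 1) = 1 := by
    calc ∑ x : 𝒳, ∑ rv : Fin (qe + 1) → ℛ, ∑ z : 𝒵, p (x, z) / (Fintype.card ℛ : ℝ) ^ (qe + 1)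
        = ∑ x : 𝒳, ∑ z : 𝒵, p (x, z) := by
          refine Finset.sum_congr rfl fun x _ => ?_
          rw [Finset.sum_const, Finset.card_univ, nsmul_eq_mul, hcard, Finset.mul_sum]
          refine Finset.sum_congr rfl fun z _ => ?_
          field_simp
      _ = 1 := by rw [← hsum]; exact (Fintype.sum_prod_type p).symm
  -- total mass of the real distribution
  have hreal1 : (∑ w : 𝒵 × 𝒞₁ × (Fin ℓ → Bool) × (Fin qe → 𝒞₁ × (Fin ℓ → Bool)), ∑ x : 𝒳, ∑ rv : Fin (qe + 1) → ℛ,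
      (p (x, w.1) / (Fintype.card ℛ : ℝ) ^ (qe + 1)) * (if Enc (x, rv (Fin.last qe)) = (w.2.1, w.2.2.1) ∧ (∀ i : Fin qe, w.2.2.2 i = Enc (x, rv i.castSucc)) then 1 else 0)) = 1 := by
    calc (∑ w : 𝒵 × 𝒞₁ × (Fin ℓ → Bool) × (Fin qe → 𝒞₁ × (Fin ℓ → Bool)), ∑ x : 𝒳, ∑ rv : Fin (qe + 1) → ℛ,
        (p (x, w.1) / (Fintype.card ℛ : ℝ) ^ (qe + 1)) * (if Enc (x, rv (Fin.last qe)) = (w.2.1, w.2.2.1) ∧ (∀ i : Fin qe, w.2.2.2 i = Enc (x, rv i.castSucc)) then 1 else 0))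
        = ∑ w : 𝒵 × 𝒞₁ × (Fin ℓ → Bool) × (Fin qe → 𝒞₁ × (Fin ℓ → Bool)), (∑ x : 𝒳, ∑ rv : Fin (qe + 1) → ℛ,
            (p (x, w.1) / (Fintype.card ℛ : ℝ) ^ (qe + 1)) * (if Enc (x, rv (Fin.last qe)) = (w.2.1, w.2.2.1) ∧ (∀ i : Fin qe, w.2.2.2 i = Enc (x, rv i.castSucc)) then 1 else 0)) * (fun _ : 𝒵 × 𝒞₁ × (Fin ℓ → Bool) × (Fin qe → 𝒞₁ × (Fin ℓ → Bool)) => (1:ℝ)) w := by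
          simp only [mul_one]
      _ = ∑ x : 𝒳, ∑ rv : Fin (qe + 1) → ℛ, ∑ w : 𝒵 × 𝒞₁ × (Fin ℓ → Bool) × (Fin qe → 𝒞₁ × (Fin ℓ → Bool)),
            ((p (x, w.1) / (Fintype.card ℛ : ℝ) ^ (qe + 1)) * (if Enc (x, rv (Fin.last qe)) = (w.2.1, w.2.2.1) ∧ (∀ i : Fin qe, w.2.2.2 i = Enc (x, rv i.castSucc)) then 1 else 0)) * (fun _ : 𝒵 × 𝒞₁ × (Fin ℓ → Bool) × (Fin qe → 𝒞₁ × (Fin ℓ → Bool)) => (1:ℝ)) w :=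
          sum_swap3 _ _
      _ = ∑ x : 𝒳, ∑ rv : Fin (qe + 1) → ℛ, ∑ z : 𝒵,
            (p (x, z) / (Fintype.card ℛ : ℝ) ^ (qe + 1)) * (fun _ : 𝒵 × 𝒞₁ × (Fin ℓ → Bool) × (Fin qe → 𝒞₁ × (Fin ℓ → Bool)) => (1:ℝ)) (z, ((Enc (x, rv (Fin.last qe))).1, (Enc (x, rv (Fin.last qe))).2, fun i => Enc (x, rv i.castSucc))) := by
          refine Finset.sum_congr rfl fun x _ => Finset.sum_congr rfl fun rv _ => ?_
          exact sum_collapse_real _ _ (hcond x rv)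
            (fun z => p (x, z) / (Fintype.card ℛ : ℝ) ^ (qe + 1)) (fun _ => (1:ℝ))
      _ = 1 := by simp only [mul_one]; exact hw1
  -- total mass of the ideal distribution
  have hideal1 : (∑ w : 𝒵 × 𝒞₁ × (Fin ℓ → Bool) × (Fin qe → 𝒞₁ × (Fin ℓ → Bool)), ∑ x : 𝒳, ∑ rv : Fin (qe + 1) → ℛ,
      (p (x, w.1) / ((Fintype.card ℛ : ℝ) ^ (qe + 1) * 2 ^ ℓ)) * (if (Enc (x, rv (Fin.last qe))).1 = w.2.1 ∧ (∀ i : Fin qe, w.2.2.2 i = Enc (x, rv i.castSucc)) then 1 else 0)) = 1 := by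
    have hcardK : (Fintype.card (Fin ℓ → Bool) : ℝ) = (2:ℝ) ^ ℓ := by
      rw [Fintype.card_fun]
      push_cast [Fintype.card_fin, Fintype.card_bool]
      ring
    calc (∑ w : 𝒵 × 𝒞₁ × (Fin ℓ → Bool) × (Fin qe → 𝒞₁ × (Fin ℓ → Bool)), ∑ x : 𝒳, ∑ rv : Fin (qe + 1) → ℛ,
        (p (x, w.1) / ((Fintype.card ℛ : ℝ) ^ (qe + 1) * 2 ^ ℓ)) * (if (Enc (x, rv (Fin.last qe))).1 = w.2.1 ∧ (∀ i : Fin qe, w.2.2.2 i = Enc (x, rv i.castSucc)) then 1 else 0))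
        = ∑ w : 𝒵 × 𝒞₁ × (Fin ℓ → Bool) × (Fin qe → 𝒞₁ × (Fin ℓ → Bool)), (∑ x : 𝒳, ∑ rv : Fin (qe + 1) → ℛ,
            (p (x, w.1) / ((Fintype.card ℛ : ℝ) ^ (qe + 1) * 2 ^ ℓ)) * (if (Enc (x, rv (Fin.last qe))).1 = w.2.1 ∧ (∀ i : Fin qe, w.2.2.2 i = Enc (x, rv i.castSucc)) then 1 else 0)) * (fun _ : 𝒵 × 𝒞₁ × (Fin ℓ → Bool) × (Fin qe → 𝒞₁ × (Fin ℓ → Bool)) => (1:ℝ)) w := by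
          simp only [mul_one]
      _ = ∑ x : 𝒳, ∑ rv : Fin (qe + 1) → ℛ, ∑ w : 𝒵 × 𝒞₁ × (Fin ℓ → Bool) × (Fin qe → 𝒞₁ × (Fin ℓ → Bool)),
            ((p (x, w.1) / ((Fintype.card ℛ : ℝ) ^ (qe + 1) * 2 ^ ℓ)) * (if (Enc (x, rv (Fin.last qe))).1 = w.2.1 ∧ (∀ i : Fin qe, w.2.2.2 i = Enc (x, rv i.castSucc)) then 1 else 0)) * (fun _ : 𝒵 × 𝒞₁ × (Fin ℓ → Bool) × (Fin qe → 𝒞₁ × (Fin ℓ → Bool)) => (1:ℝ)) w :=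
          sum_swap3 _ _
      _ = ∑ x : 𝒳, ∑ rv : Fin (qe + 1) → ℛ, ∑ z : 𝒵,
            (p (x, z) / ((Fintype.card ℛ : ℝ) ^ (qe + 1) * 2 ^ ℓ)) * ∑ k : Fin ℓ → Bool,
              (fun _ : 𝒵 × 𝒞₁ × (Fin ℓ → Bool) × (Fin qe → 𝒞₁ × (Fin ℓ → Bool)) => (1:ℝ)) (z, (Enc (x, rv (Fin.last qe))).1, k, fun i => Enc (x, rv i.castSucc)) := by
          refine Finset.sum_congr rfl fun x _ => Finset.sum_congr rfl fun rv _ => ?_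
          exact sum_collapse_ideal _ _ (hA x rv) _ _ (hC x rv)
            (fun z => p (x, z) / ((Fintype.card ℛ : ℝ) ^ (qe + 1) * 2 ^ ℓ)) (fun _ => (1:ℝ))
      _ = ∑ x : 𝒳, ∑ rv : Fin (qe + 1) → ℛ, ∑ z : 𝒵, p (x, z) / (Fintype.card ℛ : ℝ) ^ (qe + 1) := by
          refine Finset.sum_congr rfl fun x _ => Finset.sum_congr rfl fun rv _ =>
            Finset.sum_congr rfl fun z _ => ?_
          simp only [Finset.sum_const, Finset.card_univ, nsmul_eq_mul, mul_one, hcardK]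
          field_simp
      _ = 1 := hw1
  -- step 1: the real game equals integration of advF against the real distribution
  have E1 : (∑ w : 𝒵 × 𝒞₁ × (Fin ℓ → Bool) × (Fin qe → 𝒞₁ × (Fin ℓ → Bool)), (∑ x : 𝒳, ∑ rv : Fin (qe + 1) → ℛ, (p (x, w.1) / (Fintype.card ℛ : ℝ) ^ (qe + 1)) * (if Enc (x, rv (Fin.last qe)) = (w.2.1, w.2.2.1) ∧ (∀ i : Fin qe, w.2.2.2 i = Enc (x, rv i.castSucc)) then 1 else 0)) * advF D g A₁ A₂ w) = (∑ x : 𝒳, ∑ z : 𝒵, ∑ rv : Fin (qe + 1) → ℛ,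
          (p (x, z) / (Fintype.card ℛ : ℝ) ^ (qe + 1)) *
            (let v := resps Enc D g x z (fun i => rv i.castSucc)
             let a := A₁ (z, v)
             let ck := Enc (x, rv (Fin.last qe))
             (1 / 2) * (if A₂ (a.2.2, ck.1, D ck.2 a.1) = false then 1 else 0)
               + (1 / 2) * (if A₂ (a.2.2, ck.1, D ck.2 a.2.1) = true then 1 else 0))) := by
    calc ∑ w : 𝒵 × 𝒞₁ × (Fin ℓ → Bool) × (Fin qe → 𝒞₁ × (Fin ℓ → Bool)), (∑ x : 𝒳, ∑ rv : Fin (qe + 1) → ℛ, (p (x, w.1) / (Fintype.card ℛ : ℝ) ^ (qe + 1)) * (if Enc (x, rv (Fin.last qe)) = (w.2.1, w.2.2.1) ∧ (∀ i : Fin qe, w.2.2.2 i = Enc (x, rv i.castSucc)) then 1 else 0)) * advF D g A₁ A₂ w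
        = ∑ x : 𝒳, ∑ rv : Fin (qe + 1) → ℛ, ∑ w : 𝒵 × 𝒞₁ × (Fin ℓ → Bool) × (Fin qe → 𝒞₁ × (Fin ℓ → Bool)),
            ((p (x, w.1) / (Fintype.card ℛ : ℝ) ^ (qe + 1)) * (if Enc (x, rv (Fin.last qe)) = (w.2.1, w.2.2.1) ∧ (∀ i : Fin qe, w.2.2.2 i = Enc (x, rv i.castSucc)) then 1 else 0)) * advF D g A₁ A₂ w := sum_swap3 _ _
      _ = ∑ x : 𝒳, ∑ rv : Fin (qe + 1) → ℛ, ∑ z : 𝒵,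
            (p (x, z) / (Fintype.card ℛ : ℝ) ^ (qe + 1)) * advF D g A₁ A₂ (z, ((Enc (x, rv (Fin.last qe))).1, (Enc (x, rv (Fin.last qe))).2, fun i => Enc (x, rv i.castSucc))) := by
          refine Finset.sum_congr rfl fun x _ => Finset.sum_congr rfl fun rv _ => ?_
          exact sum_collapse_real _ _ (hcond x rv)
            (fun z => p (x, z) / (Fintype.card ℛ : ℝ) ^ (qe + 1)) (advF D g A₁ A₂)
      _ = ∑ x : 𝒳, ∑ z : 𝒵, ∑ rv : Fin (qe + 1) → ℛ,
            (p (x, z) / (Fintype.card ℛ : ℝ) ^ (qe + 1)) * advF D g A₁ A₂ (z, ((Enc (x, rv (Fin.last qe))).1, (Enc (x, rv (Fin.last qe))).2, fun i => Enc (x, rv i.castSucc))) :=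
          Finset.sum_congr rfl fun x _ => Finset.sum_comm
      _ = (∑ x : 𝒳, ∑ z : 𝒵, ∑ rv : Fin (qe + 1) → ℛ,
          (p (x, z) / (Fintype.card ℛ : ℝ) ^ (qe + 1)) *
            (let v := resps Enc D g x z (fun i => rv i.castSucc)
             let a := A₁ (z, v)
             let ck := Enc (x, rv (Fin.last qe))
             (1 / 2) * (if A₂ (a.2.2, ck.1, D ck.2 a.1) = false then 1 else 0)
               + (1 / 2) * (if A₂ (a.2.2, ck.1, D ck.2 a.2.1) = true then 1 else 0))) := by
          refine Finset.sum_congr rfl fun x _ => Finset.sum_congr rfl fun z _ =>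
            Finset.sum_congr rfl fun rv _ => ?_
          have hv := resps_eq Enc D g x z (fun i => rv i.castSucc)
          simp only [advF, hv]
  -- step 2: the ideal game equals integration of advF against the ideal distribution
  have E2 : (∑ w : 𝒵 × 𝒞₁ × (Fin ℓ → Bool) × (Fin qe → 𝒞₁ × (Fin ℓ → Bool)), (∑ x : 𝒳, ∑ rv : Fin (qe + 1) → ℛ, (p (x, w.1) / ((Fintype.card ℛ : ℝ) ^ (qe + 1) * 2 ^ ℓ)) * (if (Enc (x, rv (Fin.last qe))).1 = w.2.1 ∧ (∀ i : Fin qe, w.2.2.2 i = Enc (x, rv i.castSucc)) then 1 else 0)) * advF D g A₁ A₂ w)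
      = ∑ x : 𝒳, ∑ rv : Fin (qe + 1) → ℛ, ∑ z : 𝒵,
          (p (x, z) / (Fintype.card ℛ : ℝ) ^ (qe + 1)) * (∑ k : Fin ℓ → Bool, (1 / (2 ^ ℓ : ℝ)) * advF D g A₁ A₂ (z, (Enc (x, rv (Fin.last qe))).1, k, fun i => Enc (x, rv i.castSucc))) := by
    calc ∑ w : 𝒵 × 𝒞₁ × (Fin ℓ → Bool) × (Fin qe → 𝒞₁ × (Fin ℓ → Bool)), (∑ x : 𝒳, ∑ rv : Fin (qe + 1) → ℛ, (p (x, w.1) / ((Fintype.card ℛ : ℝ) ^ (qe + 1) * 2 ^ ℓ)) * (if (Enc (x, rv (Fin.last qe))).1 = w.2.1 ∧ (∀ i : Fin qe, w.2.2.2 i = Enc (x, rv i.castSucc)) then 1 else 0)) * advF D g A₁ A₂ w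
        = ∑ x : 𝒳, ∑ rv : Fin (qe + 1) → ℛ, ∑ w : 𝒵 × 𝒞₁ × (Fin ℓ → Bool) × (Fin qe → 𝒞₁ × (Fin ℓ → Bool)),
            ((p (x, w.1) / ((Fintype.card ℛ : ℝ) ^ (qe + 1) * 2 ^ ℓ)) * (if (Enc (x, rv (Fin.last qe))).1 = w.2.1 ∧ (∀ i : Fin qe, w.2.2.2 i = Enc (x, rv i.castSucc)) then 1 else 0)) * advF D g A₁ A₂ w := sum_swap3 _ _
      _ = ∑ x : 𝒳, ∑ rv : Fin (qe + 1) → ℛ, ∑ z : 𝒵,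
            (p (x, z) / ((Fintype.card ℛ : ℝ) ^ (qe + 1) * 2 ^ ℓ)) * ∑ k : Fin ℓ → Bool,
              advF D g A₁ A₂ (z, (Enc (x, rv (Fin.last qe))).1, k, fun i => Enc (x, rv i.castSucc)) := by
          refine Finset.sum_congr rfl fun x _ => Finset.sum_congr rfl fun rv _ => ?_
          exact sum_collapse_ideal _ _ (hA x rv) _ _ (hC x rv)
            (fun z => p (x, z) / ((Fintype.card ℛ : ℝ) ^ (qe + 1) * 2 ^ ℓ)) (advF D g A₁ A₂)
      _ = ∑ x : 𝒳, ∑ rv : Fin (qe + 1) → ℛ, ∑ z : 𝒵,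
            (p (x, z) / (Fintype.card ℛ : ℝ) ^ (qe + 1)) * (∑ k : Fin ℓ → Bool, (1 / (2 ^ ℓ : ℝ)) * advF D g A₁ A₂ (z, (Enc (x, rv (Fin.last qe))).1, k, fun i => Enc (x, rv i.castSucc))) := by
          refine Finset.sum_congr rfl fun x _ => Finset.sum_congr rfl fun rv _ =>
            Finset.sum_congr rfl fun z _ => ?_
          rw [Finset.mul_sum, Finset.mul_sum]
          refine Finset.sum_congr rfl fun k _ => ?_
          ring
  -- step 3: the ideal game is σ'-close to 1/2 by one-time security of the DEM
  have hidB : |(∑ w : 𝒵 × 𝒞₁ × (Fin ℓ → Bool) × (Fin qe → 𝒞₁ × (Fin ℓ → Bool)), (∑ x : 𝒳, ∑ rv : Fin (qe + 1) → ℛ, (p (x, w.1) / ((Fintype.card ℛ : ℝ) ^ (qe + 1) * 2 ^ ℓ)) * (if (Enc (x, rv (Fin.last qe))).1 = w.2.1 ∧ (∀ i : Fin qe, w.2.2.2 i = Enc (x, rv i.castSucc)) then 1 else 0)) * advF D g A₁ A₂ w) - 1 / 2| ≤ σ' := by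
    rw [E2]
    refine triple_weight_bound (fun x z => p (x, z) / (Fintype.card ℛ : ℝ) ^ (qe + 1))
      (fun x z => div_nonneg (hp _) (le_of_lt (by positivity))) hw1
      (fun x rv z => ∑ k : Fin ℓ → Bool, (1 / (2 ^ ℓ : ℝ)) * advF D g A₁ A₂ (z, (Enc (x, rv (Fin.last qe))).1, k, fun i => Enc (x, rv i.castSucc))) σ' ?_
    intro x rv z
    exact hDEM ((A₁ (z, resps (Prod.snd : Unit × (𝒞₁ × (Fin ℓ → Bool)) → 𝒞₁ × (Fin ℓ → Bool)) D g () z (fun i => Enc (x, rv i.castSucc)))).1) ((A₁ (z, resps (Prod.snd : Unit × (𝒞₁ × (Fin ℓ → Bool)) → 𝒞₁ × (Fin ℓ → Bool)) D g () z (fun i => Enc (x, rv i.castSucc)))).2.1)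
      (fun c₂ => A₂ ((A₁ (z, resps (Prod.snd : Unit × (𝒞₁ × (Fin ℓ → Bool)) → 𝒞₁ × (Fin ℓ → Bool)) D g () z (fun i => Enc (x, rv i.castSucc)))).2.2, (Enc (x, rv (Fin.last qe))).1, c₂))
  -- step 4: the real and ideal games are σ-close by iKEM security
  have hSD := (abs_sum_mul_sub_le_SD (fun w : 𝒵 × 𝒞₁ × (Fin ℓ → Bool) × (Fin qe → 𝒞₁ × (Fin ℓ → Bool)) => ∑ x : 𝒳, ∑ rv : Fin (qe + 1) → ℛ, (p (x, w.1) / (Fintype.card ℛ : ℝ) ^ (qe + 1)) * (if Enc (x, rv (Fin.last qe)) = (w.2.1, w.2.2.1) ∧ (∀ i : Fin qe, w.2.2.2 i = Enc (x, rv i.castSucc)) then 1 else 0)) (fun w : 𝒵 × 𝒞₁ × (Fin ℓ → Bool) × (Fin qe → 𝒞₁ × (Fin ℓ → Bool)) => ∑ x : 𝒳, ∑ rv : Fin (qe + 1) → ℛ, (p (x, w.1) / ((Fintype.card ℛ : ℝ) ^ (qe + 1) * 2 ^ ℓ)) * (if (Enc (x, rv (Fin.last qe))).1 = w.2.1 ∧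 (∀ i : Fin qe, w.2.2.2 i = Enc (x, rv i.castSucc)) then 1 else 0)) (advF D g A₁ A₂)
      (hreal1.trans hideal1.symm) (advF_nonneg D g A₁ A₂) (advF_le_one D g A₁ A₂)).trans hKEM
  -- conclude
  rw [← E1]
  calc |(∑ w : 𝒵 × 𝒞₁ × (Fin ℓ → Bool) × (Fin qe → 𝒞₁ × (Fin ℓ → Bool)), (∑ x : 𝒳, ∑ rv : Fin (qe + 1) → ℛ, (p (x, w.1) / (Fintype.card ℛ : ℝ) ^ (qe + 1)) * (if Enc (x, rv (Fin.last qe)) = (w.2.1, w.2.2.1) ∧ (∀ i : Fin qe, w.2.2.2 i = Enc (x, rv i.castSucc)) then 1 else 0)) * advF D g A₁ A₂ w) - 1 / 2|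
      = |((∑ w : 𝒵 × 𝒞₁ × (Fin ℓ → Bool) × (Fin qe → 𝒞₁ × (Fin ℓ → Bool)), (∑ x : 𝒳, ∑ rv : Fin (qe + 1) → ℛ, (p (x, w.1) / (Fintype.card ℛ : ℝ) ^ (qe + 1)) * (if Enc (x, rv (Fin.last qe)) = (w.2.1, w.2.2.1) ∧ (∀ i : Fin qe, w.2.2.2 i = Enc (x, rv i.castSucc)) then 1 else 0)) * advF D g A₁ A₂ w) - (∑ w : 𝒵 × 𝒞₁ × (Fin ℓ → Bool) × (Fin qe → 𝒞₁ × (Fin ℓ → Bool)), (∑ x : 𝒳, ∑ rv : Fin (qe + 1) → ℛ, (p (x, w.1) / ((Fintype.card ℛ : ℝ) ^ (qe + 1) * 2 ^ ℓ)) * (if (Enc (x, rv (Fin.last qe))).1 = w.2.1 ∧ (∀ i : Fin qe, w.2.2.2 i = Enc (x, rv i.castSucc)) then 1 else 0)) * advF D g A₁ A₂ w)) + ((∑ w : 𝒵 × 𝒞₁ × (Fin ℓ → Bool) × (Fin qe → 𝒞₁ × (Fin ℓ → Bool)), (∑ x : 𝒳, ∑ rv : Fin (qe + 1) → ℛ,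 (p (x, w.1) / ((Fintype.card ℛ : ℝ) ^ (qe + 1) * 2 ^ ℓ)) * (if (Enc (x, rv (Fin.last qe))).1 = w.2.1 ∧ (∀ i : Fin qe, w.2.2.2 i = Enc (x, rv i.castSucc)) then 1 else 0)) * advF D g A₁ A₂ w) - 1 / 2)| := by congr 1; ring
    _ ≤ |(∑ w : 𝒵 × 𝒞₁ × (Fin ℓ → Bool) × (Fin qe → 𝒞₁ × (Fin ℓ → Bool)), (∑ x : 𝒳, ∑ rv : Fin (qe + 1) → ℛ, (p (x, w.1) / (Fintype.card ℛ : ℝ) ^ (qe + 1)) * (if Enc (x, rv (Fin.last qe)) = (w.2.1, w.2.2.1) ∧ (∀ i : Fin qe, w.2.2.2 i = Enc (x, rv i.castSucc)) then 1 else 0)) * advF D g A₁ A₂ w) - (∑ w : 𝒵 × 𝒞₁ × (Fin ℓ → Bool) × (Fin qe → 𝒞₁ × (Fin ℓ → Bool)), (∑ x : 𝒳, ∑ rv : Fin (qe + 1) → ℛ, (p (x, w.1) / ((Fintype.card ℛ : ℝ) ^ (qe + 1) * 2 ^ ℓ)) * (if (Enc (x, rv (Fin.last qe))).1 = w.2.1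 ∧ (∀ i : Fin qe, w.2.2.2 i = Enc (x, rv i.castSucc)) then 1 else 0)) * advF D g A₁ A₂ w)| + |(∑ w : 𝒵 × 𝒞₁ × (Fin ℓ → Bool) × (Fin qe → 𝒞₁ × (Fin ℓ → Bool)), (∑ x : 𝒳, ∑ rv : Fin (qe + 1) → ℛ, (p (x, w.1) / ((Fintype.card ℛ : ℝ) ^ (qe + 1) * 2 ^ ℓ)) * (if (Enc (x, rv (Fin.last qe))).1 = w.2.1 ∧ (∀ i : Fin qe, w.2.2.2 i = Enc (x, rv i.castSucc)) then 1 else 0)) * advF D g A₁ A₂ w) - 1 / 2| := abs_add_le _ _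
    _ ≤ σ + σ' := add_le_add hSD hidB
end
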